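/- arXiv:1610.03734 — 2 statements merged into one kernel-verified Lean document; each statement's English description precedes it below -/
import Mathlib

section
/- Let G : ℝ → ℝ be differentiable with derivative g, G(0) = 0, and suppose there exist R ≥ 0 and μ > 2 such that 0 < μ·G(t) ≤ g(t)·t for all |t| > R. Then there exist constants c₁ > 0 and c₂ ≥ 0 such that G(t) ≥ c₁·|t|^μ − c₂ for all t ∈ ℝ. -/
lemma aux_growth (G g : ℝ → ℝ) (hderiv : ∀ t, HasDerivAt G (g t) t)
    (μ T : ℝ) (hμ : 0 < μ) (hT : 0 < T)
    (h : ∀ s, T ≤ s → μ * G s ≤ g s * s) :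
    ∀ t, T ≤ t → G T * T ^ (-μ) * t ^ μ ≤ G t := by
  intro t ht
  set F : ℝ → ℝ := fun s => G s * s ^ (-μ) with hF
  have hFd : ∀ s : ℝ, 0 < s →
      HasDerivAt F (g s * s ^ (-μ) + G s * (-μ * s ^ (-μ - 1))) s := by
    intro s hs
    exact (hderiv s).mul (Real.hasDerivAt_rpow_const (Or.inl hs.ne'))
  have hmono : MonotoneOn F (Set.Ici T) := by
    apply monotoneOn_of_deriv_nonneg (convex_Ici T)
    · exact fun s hs => ((hFd s (lt_of_lt_of_le hT hs)).continuousAt).continuousWithinAt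
    · intro s hs
      rw [interior_Ici] at hs
      exact ((hFd s (hT.trans hs)).differentiableAt).differentiableWithinAt
    · intro s hs
      rw [interior_Ici] at hs
      have hs0 : 0 < s := hT.trans hs
      rw [(hFd s hs0).deriv]
      have hkey : μ * G s ≤ g s * s := h s hs.le
      have hsplit : s ^ (-μ) = s ^ (-μ - 1) * s := by
        rw [← Real.rpow_add_one hs0.ne' (-μ - 1)]
        ring_nf
      have hp : (0:ℝ) < s ^ (-μ - 1) := Real.rpow_pos_of_pos hs0 _
      have : g s * s ^ (-μ) + G s * (-μ * s ^ (-μ - 1))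
          = (g s * s - μ * G s) * s ^ (-μ - 1) := by
        rw [hsplit]; ring
      rw [this]
      exact mul_nonneg (by linarith) hp.le
  have hle : F T ≤ F t := hmono Set.self_mem_Ici ht ht
  have ht0 : 0 < t := hT.trans_le ht
  have htp : (0:ℝ) < t ^ μ := Real.rpow_pos_of_pos ht0 _
  have hcalc : G t * t ^ (-μ) * t ^ μ = G t := by
    rw [mul_assoc, ← Real.rpow_add ht0, neg_add_cancel, Real.rpow_zero, mul_one]
  calc G T * T ^ (-μ) * t ^ μ ≤ G t * t ^ (-μ) * t ^ μ := by
        exact mul_le_mul_of_nonneg_right hle htp.le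
    _ = G t := hcalc

theorem stmt_0 (G g : ℝ → ℝ) (hderiv : ∀ t, HasDerivAt G (g t) t) (hG0 : G 0 = 0)
    (R μ : ℝ) (hR : 0 ≤ R) (hμ : 2 < μ)
    (hAR : ∀ t : ℝ, R < |t| → 0 < μ * G t ∧ μ * G t ≤ g t * t) :
    ∃ c₁ > (0:ℝ), ∃ c₂ ≥ (0:ℝ), ∀ t : ℝ, G t ≥ c₁ * |t| ^ μ - c₂ := by
  have hμ0 : (0:ℝ) < μ := by linarith
  set T : ℝ := R + 1 with hTdef
  have hT : 0 < T := by positivity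
  have hRT : R < T := by simp [hTdef]
  -- positive side hypotheses
  have habs_pos : ∀ s, T ≤ s → R < |s| := by
    intro s hs
    rw [abs_of_pos (hT.trans_le hs)]; linarith
  have hpos : ∀ s, T ≤ s → μ * G s ≤ g s * s :=
    fun s hs => (hAR s (habs_pos s hs)).2
  have hGTpos : 0 < G T := by
    have := (hAR T (habs_pos T le_rfl)).1
    nlinarith
  -- negative side: consider G (-s)
  have hderivN : ∀ s : ℝ, HasDerivAt (fun x => G (-x)) (-(g (-s))) s := by
    intro s
    have h1 : HasDerivAt (fun x : ℝ => -x) (-1) s := (hasDerivAt_neg s)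
    have := (hderiv (-s)).comp s h1
    simp only [mul_neg, mul_one] at this
    exact this
  have hnegA : ∀ s, T ≤ s → R < |(-s)| := by
    intro s hs; rw [abs_neg]; exact habs_pos s hs
  have hneg : ∀ s, T ≤ s → μ * G (-s) ≤ (-(g (-s))) * s := by
    intro s hs
    have := (hAR (-s) (hnegA s hs)).2
    nlinarith [this]
  have hGTNpos : 0 < G (-T) := by
    have := (hAR (-T) (hnegA T le_rfl)).1
    nlinarith
  have hposG := aux_growth G g hderiv μ T hμ0 hT hpos
  have hnegG := aux_growth (fun x => G (-x)) (fun x => -(g (-x))) hderivN μ T hμ0 hT hneg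
  -- minimum on the compact interval
  have hcont : Continuous G := by
    rw [continuous_iff_continuousAt]
    exact fun t => (hderiv t).continuousAt
  obtain ⟨x, hx, hxmin⟩ := isCompact_Icc.exists_isMinOn
    (Set.nonempty_Icc.2 (by linarith : -T ≤ T)) hcont.continuousOn
  set m : ℝ := G x with hm
  set c₁ : ℝ := min (G T) (G (-T)) * T ^ (-μ) with hc1
  have hTpow : (0:ℝ) < T ^ (-μ) := Real.rpow_pos_of_pos hT _
  have hc1pos : 0 < c₁ := mul_pos (lt_min hGTpos hGTNpos) hTpow
  set c₂ : ℝ := max 0 (c₁ * T ^ μ - m) with hc2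
  have hc2nn : 0 ≤ c₂ := le_max_left _ _
  refine ⟨c₁, hc1pos, c₂, hc2nn, fun t => ?_⟩
  rcases le_or_gt (|t|) T with hcase | hcase
  · -- small t
    have htmem : t ∈ Set.Icc (-T) T := by
      constructor <;> [linarith [neg_abs_le t]; linarith [le_abs_self t]]
    have h1 : m ≤ G t := hxmin htmem
    have h2 : c₁ * |t| ^ μ ≤ c₁ * T ^ μ :=
      mul_le_mul_of_nonneg_left
        (Real.rpow_le_rpow (abs_nonneg t) hcase hμ0.le) hc1pos.le
    have h3 : c₁ * T ^ μ - m ≤ c₂ := le_max_right _ _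
    simp only [ge_iff_le]
    linarith
  · -- large |t|
    have hbig : c₁ * |t| ^ μ ≤ G t := by
      rcases le_or_gt 0 t with htnn | htneg
      · have hta : |t| = t := abs_of_nonneg htnn
        have htT : T ≤ t := by rw [hta] at hcase; linarith
        have := hposG t htT
        have hmin : c₁ ≤ G T * T ^ (-μ) :=
          mul_le_mul_of_nonneg_right (min_le_left _ _) hTpow.le
        have hpow : (0:ℝ) ≤ t ^ μ := Real.rpow_nonneg (by linarith) _
        calc c₁ * |t| ^ μ = c₁ * t ^ μ := by rw [hta]
          _ ≤ G T * T ^ (-μ) * t ^ μ := mul_le_mul_of_nonneg_right hmin hpow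
          _ ≤ G t := this
      · have hta : |t| = -t := abs_of_neg htneg
        have htT : T ≤ -t := by rw [hta] at hcase; linarith
        have := hnegG (-t) htT
        simp only [neg_neg] at this
        have hmin : c₁ ≤ G (-T) * T ^ (-μ) :=
          mul_le_mul_of_nonneg_right (min_le_right _ _) hTpow.le
        have hpow : (0:ℝ) ≤ (-t) ^ μ := Real.rpow_nonneg (by linarith) _
        calc c₁ * |t| ^ μ = c₁ * (-t) ^ μ := by rw [hta]
          _ ≤ G (-T) * T ^ (-μ) * (-t) ^ μ := mul_le_mul_of_nonneg_right hmin hpow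
          _ ≤ G t := this
    simp only [ge_iff_le]
    linarith
end

section
/- Let H₁, H₂ be real Hilbert spaces and K : H₁ → H₂ a bounded linear operator. Suppose there is a compact linear operator T : H₂ → H₁ (the trace/embedding) such that ⟨K u, v⟩_{H₂} = ⟨u, T v⟩_{H₁} for all u ∈ H₁, v ∈ H₂, and ‖K u‖²_{H₂} ≤ ‖u‖_{H₁}·‖T(Ku)‖_{H₁}. Then K is a compact operator. -/
theorem stmt_8 {H₁ H₂ : Type*}
    [NormedAddCommGroup H₁] [InnerProductSpace ℝ H₁] [CompleteSpace H₁]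
    [NormedAddCommGroup H₂] [InnerProductSpace ℝ H₂] [CompleteSpace H₂]
    (K : H₁ →L[ℝ] H₂) (T : H₂ →L[ℝ] H₁) (hT : IsCompactOperator T)
    (hadj : ∀ (u : H₁) (v : H₂), (inner ℝ (K u) v : ℝ) = inner ℝ u (T v))
    (hid : ∀ u : H₁, ‖K u‖ ^ 2 ≤ ‖u‖ * ‖T (K u)‖) :
    IsCompactOperator K := by
  have hTK : IsCompactOperator (⇑T ∘ ⇑K) := hT.comp_clm K
  -- key estimate for u, u' in the closed unit ball
  have key : ∀ u u' : H₁, u ∈ Metric.closedBall (0 : H₁) 1 →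
      u' ∈ Metric.closedBall (0 : H₁) 1 →
      ‖K u - K u'‖ ^ 2 ≤ 2 * ‖T (K u) - T (K u')‖ := by
    intro u u' hu hu'
    have h1 := hid (u - u')
    rw [map_sub, map_sub] at h1
    have hnorm : ‖u - u'‖ ≤ 2 := by
      calc ‖u - u'‖ ≤ ‖u‖ + ‖u'‖ := norm_sub_le _ _
        _ ≤ 1 + 1 := by
            gcongr
            · simpa using hu
            · simpa using hu'
        _ = 2 := by norm_num
    calc ‖K u - K u'‖ ^ 2 ≤ ‖u - u'‖ * ‖T (K u) - T (K u')‖ := h1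
      _ ≤ 2 * ‖T (K u) - T (K u')‖ := by
          gcongr
  -- the image of the closed unit ball under K is totally bounded
  have htb : TotallyBounded (⇑K '' Metric.closedBall 0 1) := by
    rw [Metric.totallyBounded_iff]
    intro ε hε
    -- T '' (K '' ball) is totally bounded
    have htb' : TotallyBounded ((⇑T ∘ ⇑K) '' Metric.closedBall 0 1) := by
      have hTK' : IsCompactOperator ⇑((T.comp K).toLinearMap) := hTK
      have hc := hTK'.isCompact_closure_image_closedBall 1
      exact (hc.totallyBounded).subset subset_closure
    rw [totallyBounded_iff_subset] at htb'
    obtain ⟨t, hts, htf, hcov⟩ := htb' {p : H₁ × H₁ | dist p.1 p.2 < ε ^ 2 / 2}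
      (Metric.dist_mem_uniformity (by positivity))
    -- for each y ∈ t choose a preimage in the ball
    choose! w hw1 hw2 using fun y (hy : y ∈ t) => hts hy
    refine ⟨(fun y => K (w y)) '' t, htf.image _, ?_⟩
    rintro - ⟨u, hu, rfl⟩
    have : T (K u) ∈ ⋃ y ∈ t, {x | (x, y) ∈ {p : H₁ × H₁ | dist p.1 p.2 < ε ^ 2 / 2}} :=
      hcov ⟨u, hu, rfl⟩
    simp only [Set.mem_iUnion, Set.mem_setOf_eq] at this
    obtain ⟨y, hy, hdy⟩ := this
    refine Set.mem_biUnion (Set.mem_image_of_mem _ hy) ?_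
    have hwy := hw2 y hy
    have hball := hw1 y hy
    -- y = T (K (w y))
    have hsq : ‖K u - K (w y)‖ ^ 2 < ε ^ 2 := by
      calc ‖K u - K (w y)‖ ^ 2 ≤ 2 * ‖T (K u) - T (K (w y))‖ := key u (w y) hu hball
        _ = 2 * dist (T (K u)) y := by
            simp only [Function.comp_apply] at hwy
            rw [dist_eq_norm, hwy]
        _ < 2 * (ε ^ 2 / 2) := by linarith [hdy]
        _ = ε ^ 2 := by ring
    have hlt : ‖K u - K (w y)‖ < ε := lt_of_pow_lt_pow_left₀ 2 hε.le hsq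
    exact Metric.mem_ball.mpr (by rw [dist_eq_norm]; exact hlt)
  -- conclude compactness
  have : IsCompactOperator ⇑(K.toLinearMap) :=
    (isCompactOperator_iff_isCompact_closure_image_closedBall K.toLinearMap
      (one_pos : (0:ℝ) < 1)).mpr
      (TotallyBounded.isCompact_of_isClosed htb.closure isClosed_closure)
  exact this
end
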